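/- For the bivariate Rayleigh density f(s₁,s₂) = (4s₁s₂/(σ₁²σ₂²(1−ρ²)))·exp(−(s₁²/σ₁² + s₂²/σ₂²)/(1−ρ²))·I₀((2/(1−ρ²))·√(ρ²·(s₁²/σ₁²)·(s₂²/σ₂²))) on s₁, s₂ ≥ 0 with σ₁², σ₂² > 0 and 0 ≤ ρ² < 1, the marginal density of S₁ is f_{S₁}(s₁) = (2s₁/σ₁²)·exp(−s₁²/σ₁²) for s₁ ≥ 0. -/

import Mathlib

open MeasureTheory Real Set

/-- The zeroth-order modified Bessel function of the first kind,
I₀(x) = (1/π)∫₀^π exp(x cos φ) dφ. -/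
noncomputable def besselI0 (x : ℝ) : ℝ :=
  (1 / Real.pi) * ∫ φ in (0:ℝ)..Real.pi, Real.exp (x * Real.cos φ)

/-- The bivariate Rayleigh density with parameters σ₁², σ₂² and power correlation ρ². -/
noncomputable def bivRayleighPDF (σ1sq σ2sq ρsq s₁ s₂ : ℝ) : ℝ :=
  (4 * s₁ * s₂ / (σ1sq * σ2sq * (1 - ρsq)))
    * Real.exp (-(s₁^2 / σ1sq + s₂^2 / σ2sq) / (1 - ρsq))
    * besselI0 ((2 / (1 - ρsq)) * Real.sqrt (ρsq * (s₁^2 / σ1sq) * (s₂^2 / σ2sq)))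

lemma gauss_int (α β : ℝ) (hα : 0 < α) :
    Integrable (fun x : ℝ => Real.exp (-α * x ^ 2 + β * x)) := by
  have h : (fun x : ℝ => Real.exp (-α * x ^ 2 + β * x))
      = fun x => Real.exp (β ^ 2 / (4 * α)) * Real.exp (-α * (x - β / (2 * α)) ^ 2) := by
    funext x
    rw [← Real.exp_add]
    congr 1
    field_simp
    ring
  rw [h]
  exact ((integrable_exp_neg_mul_sq hα).comp_sub_right _).const_mul _

lemma gauss_val (α β : ℝ) (hα : 0 < α) :
    ∫ x : ℝ, Real.exp (-α * x ^ 2 + β * x)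
      = Real.sqrt (π / α) * Real.exp (β ^ 2 / (4 * α)) := by
  have h : (fun x : ℝ => Real.exp (-α * x ^ 2 + β * x))
      = fun x => Real.exp (β ^ 2 / (4 * α)) * Real.exp (-α * (x - β / (2 * α)) ^ 2) := by
    funext x
    rw [← Real.exp_add]
    congr 1
    field_simp
    ring
  rw [h, MeasureTheory.integral_const_mul]
  rw [show (fun x : ℝ => Real.exp (-α * (x - β / (2 * α)) ^ 2))
      = fun x => (fun y => Real.exp (-α * y ^ 2)) (x - β / (2 * α)) from rfl]
  rw [MeasureTheory.integral_sub_right_eq_self (fun y : ℝ => Real.exp (-α * y ^ 2))]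
  rw [integral_gaussian]
  ring

lemma theta_int (c : ℝ) :
    ∫ θ in Ioo (-π) π, Real.exp (c * Real.cos θ) = 2 * π * besselI0 c := by
  have hcont : ∀ a b : ℝ, IntervalIntegrable (fun θ => Real.exp (c * Real.cos θ)) volume a b :=
    fun a b => (Real.continuous_exp.comp (continuous_const.mul Real.continuous_cos)).intervalIntegrable a b
  have h1 : ∫ θ in Ioo (-π) π, Real.exp (c * Real.cos θ)
      = ∫ θ in (-π)..π, Real.exp (c * Real.cos θ) := by
    rw [intervalIntegral.integral_of_le (by linarith [Real.pi_pos]),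
      MeasureTheory.integral_Ioc_eq_integral_Ioo]
  have h2 : (∫ θ in (-π)..(0:ℝ), Real.exp (c * Real.cos θ))
      = ∫ θ in (0:ℝ)..π, Real.exp (c * Real.cos θ) := by
    have := intervalIntegral.integral_comp_neg (a := (0:ℝ)) (b := π)
      (fun θ => Real.exp (c * Real.cos θ))
    simp only [Real.cos_neg, neg_zero] at this
    rw [← this]
  have h3 := intervalIntegral.integral_add_adjacent_intervals
    (hcont (-π) 0) (hcont 0 π)
  rw [h1, ← h3, h2, besselI0]
  field_simp
  ring

lemma key_int (α β : ℝ) (hα : 0 < α) :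
    ∫ s in Ioi (0:ℝ), s * Real.exp (-α * s ^ 2) * besselI0 (β * s)
      = (1 / (2 * α)) * Real.exp (β ^ 2 / (4 * α)) := by
  set f : ℝ × ℝ → ℝ := fun p => Real.exp (-α * p.1 ^ 2 + β * p.1) * Real.exp (-α * p.2 ^ 2)
    with hf
  -- full-plane integral of f
  have hplane : ∫ p : ℝ × ℝ, f p = (π / α) * Real.exp (β ^ 2 / (4 * α)) := by
    have h0 : ∫ p : ℝ × ℝ, f p
        = (∫ x : ℝ, Real.exp (-α * x ^ 2 + β * x)) * ∫ y : ℝ, Real.exp (-α * y ^ 2) := by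
      rw [MeasureTheory.Measure.volume_eq_prod]
      exact MeasureTheory.integral_prod_mul (fun x : ℝ => Real.exp (-α * x ^ 2 + β * x)) (fun y : ℝ => Real.exp (-α * y ^ 2))
    rw [h0, gauss_val α β hα]
    have : ∫ y : ℝ, Real.exp (-α * y ^ 2) = Real.sqrt (π / α) := integral_gaussian α
    rw [this]
    rw [show Real.sqrt (π / α) * Real.exp (β ^ 2 / (4 * α)) * Real.sqrt (π / α)
        = Real.sqrt (π / α) * Real.sqrt (π / α) * Real.exp (β ^ 2 / (4 * α)) by ring,
      Real.mul_self_sqrt (div_nonneg Real.pi_pos.le hα.le)]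
  -- polar coordinates
  have hpolar : ∫ p in polarCoord.target, p.1 • f (polarCoord.symm p) = ∫ p : ℝ × ℝ, f p :=
    integral_comp_polarCoord_symm f
  set g : ℝ × ℝ → ℝ := fun p => p.1 * Real.exp (-α * p.1 ^ 2 + β * p.1 * Real.cos p.2)
    with hg
  have hfg : (fun p : ℝ × ℝ => p.1 • f (polarCoord.symm p)) = g := by
    funext p
    simp only [hf, hg, polarCoord_symm_apply, smul_eq_mul, ← Real.exp_add]
    congr 2
    have h := Real.sin_sq_add_cos_sq p.2
    linear_combination (-α * p.1 ^ 2) * h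
  have htarget : polarCoord.target = Ioi (0:ℝ) ×ˢ Ioo (-π) π := rfl
  rw [hfg, htarget] at hpolar
  -- integrability of g on the product set
  have hgint : IntegrableOn g (Ioi (0:ℝ) ×ˢ Ioo (-π) π) := by
    rw [IntegrableOn, MeasureTheory.Measure.volume_eq_prod, ← Measure.prod_restrict]
    have hbound : Integrable
        (fun p : ℝ × ℝ => Real.exp (-α * p.1 ^ 2 + (|β| + 1) * p.1) * (1:ℝ))
        ((volume.restrict (Ioi (0:ℝ))).prod (volume.restrict (Ioo (-π) π))) := by
      have hc : Integrable (fun _ : ℝ => (1:ℝ)) (volume.restrict (Ioo (-π) π)) := by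
        rw [MeasureTheory.integrable_const_iff]
        right
        exact ⟨by rw [Measure.restrict_apply_univ, Real.volume_Ioo]; exact ENNReal.ofReal_lt_top⟩
      exact Integrable.mul_prod ((gauss_int α (|β| + 1) hα).restrict) hc
    refine hbound.mono' ?_ ?_
    · exact (Continuous.aestronglyMeasurable (by fun_prop))
    · rw [Measure.prod_restrict]
      refine (MeasureTheory.ae_restrict_iff' (measurableSet_Ioi.prod measurableSet_Ioo)).2
        (Filter.Eventually.of_forall fun p hp => ?_)
      obtain ⟨hp1, _⟩ := hp
      have hp1' : (0:ℝ) < p.1 := hp1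
      rw [hg, mul_one, Real.norm_eq_abs, abs_mul, abs_of_pos hp1', Real.abs_exp]
      calc p.1 * Real.exp (-α * p.1 ^ 2 + β * p.1 * Real.cos p.2)
          ≤ Real.exp p.1 * Real.exp (-α * p.1 ^ 2 + |β| * p.1) := by
            apply mul_le_mul
            · linarith [Real.add_one_le_exp p.1]
            · apply Real.exp_le_exp.2
              have : β * p.1 * Real.cos p.2 ≤ |β| * p.1 := by
                calc β * p.1 * Real.cos p.2 ≤ |β * p.1 * Real.cos p.2| := le_abs_self _
                  _ = |β| * p.1 * |Real.cos p.2| := by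
                      rw [abs_mul, abs_mul, abs_of_pos hp1']
                  _ ≤ |β| * p.1 * 1 := by
                      apply mul_le_mul_of_nonneg_left (Real.abs_cos_le_one p.2)
                        (by positivity)
                  _ = |β| * p.1 := mul_one _
              linarith
            · positivity
            · positivity
        _ = Real.exp (-α * p.1 ^ 2 + (|β| + 1) * p.1) := by
            rw [← Real.exp_add]; ring_nf
  -- iterate the integral
  have hiter : ∫ p in Ioi (0:ℝ) ×ˢ Ioo (-π) π, g p
      = ∫ r in Ioi (0:ℝ), ∫ θ in Ioo (-π) π, g (r, θ) := by
    rw [MeasureTheory.Measure.volume_eq_prod]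
    exact MeasureTheory.setIntegral_prod g
      (by rw [← MeasureTheory.Measure.volume_eq_prod]; exact hgint)
  have hinner : ∀ r : ℝ, (∫ θ in Ioo (-π) π, g (r, θ))
      = 2 * π * (r * Real.exp (-α * r ^ 2) * besselI0 (β * r)) := by
    intro r
    have he : ∀ θ : ℝ, g (r, θ)
        = (r * Real.exp (-α * r ^ 2)) * Real.exp ((β * r) * Real.cos θ) := by
      intro θ
      simp only [hg]
      rw [Real.exp_add]
      ring
    simp_rw [he]
    rw [MeasureTheory.integral_const_mul, theta_int (β * r)]
    ring
  have hfinal : 2 * π * (∫ s in Ioi (0:ℝ), s * Real.exp (-α * s ^ 2) * besselI0 (β * s))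
      = (π / α) * Real.exp (β ^ 2 / (4 * α)) := by
    rw [← MeasureTheory.integral_const_mul]
    simp_rw [← hinner]
    rw [← hiter, hpolar, hplane]
  have hπ : (π : ℝ) ≠ 0 := Real.pi_ne_zero
  have hαne : (α : ℝ) ≠ 0 := ne_of_gt hα
  have h2 : 2 * π * ((1 / (2 * α)) * Real.exp (β ^ 2 / (4 * α)))
      = (π / α) * Real.exp (β ^ 2 / (4 * α)) := by
    field_simp
  exact mul_left_cancel₀ (mul_ne_zero two_ne_zero hπ) (hfinal.trans h2.symm)

/-- The marginal of the bivariate Rayleigh density is the univariate Rayleigh density. -/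
theorem bivRayleigh_marginal (σ1sq σ2sq ρsq : ℝ)
    (h1 : 0 < σ1sq) (h2 : 0 < σ2sq) (hρ0 : 0 ≤ ρsq) (hρ1 : ρsq < 1) :
    ∀ s₁ : ℝ, 0 ≤ s₁ →
      ∫ s₂ in Ioi (0:ℝ), bivRayleighPDF σ1sq σ2sq ρsq s₁ s₂
        = (2 * s₁ / σ1sq) * Real.exp (-(s₁^2) / σ1sq) := by
  intro s₁ hs₁
  have h1ρ : 0 < 1 - ρsq := by linarith
  set A : ℝ := 1 / (σ2sq * (1 - ρsq)) with hA_def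
  set B : ℝ := (2 / (1 - ρsq)) * Real.sqrt (ρsq * (s₁ ^ 2 / σ1sq) / σ2sq) with hB_def
  set C : ℝ := (4 * s₁ / (σ1sq * σ2sq * (1 - ρsq)))
      * Real.exp (-(s₁ ^ 2 / σ1sq) / (1 - ρsq)) with hC_def
  have hA : 0 < A := by positivity
  have hC : ∀ s₂ ∈ Ioi (0:ℝ), bivRayleighPDF σ1sq σ2sq ρsq s₁ s₂
      = C * (s₂ * Real.exp (-A * s₂ ^ 2) * besselI0 (B * s₂)) := by
    intro s₂ hs₂
    have hs₂' : (0:ℝ) < s₂ := hs₂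
    unfold bivRayleighPDF
    have hsqrt : Real.sqrt (ρsq * (s₁ ^ 2 / σ1sq) * (s₂ ^ 2 / σ2sq))
        = Real.sqrt (ρsq * (s₁ ^ 2 / σ1sq) / σ2sq) * s₂ := by
      rw [show ρsq * (s₁ ^ 2 / σ1sq) * (s₂ ^ 2 / σ2sq)
          = (ρsq * (s₁ ^ 2 / σ1sq) / σ2sq) * s₂ ^ 2 by ring,
        Real.sqrt_mul (by positivity), Real.sqrt_sq hs₂'.le]
    rw [hsqrt]
    have harg : (2 / (1 - ρsq)) * (Real.sqrt (ρsq * (s₁ ^ 2 / σ1sq) / σ2sq) * s₂)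
        = B * s₂ := by rw [hB_def]; ring
    rw [harg]
    have hexp : Real.exp (-(s₁ ^ 2 / σ1sq + s₂ ^ 2 / σ2sq) / (1 - ρsq))
        = Real.exp (-(s₁ ^ 2 / σ1sq) / (1 - ρsq)) * Real.exp (-A * s₂ ^ 2) := by
      rw [← Real.exp_add]
      congr 1
      rw [hA_def]
      field_simp
      ring
    rw [hexp, hC_def]
    ring
  rw [MeasureTheory.setIntegral_congr_fun measurableSet_Ioi hC,
    MeasureTheory.integral_const_mul, key_int A B hA]
  have hB2 : B ^ 2 / (4 * A) = ρsq * s₁ ^ 2 / (σ1sq * (1 - ρsq)) := by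
    rw [hB_def, hA_def, mul_pow, Real.sq_sqrt (by positivity)]
    field_simp
    ring
  rw [hB2]
  have hinv : 1 / (2 * A) = σ2sq * (1 - ρsq) / 2 := by
    rw [hA_def]; field_simp
  rw [hinv, hC_def]
  rw [show (4 * s₁ / (σ1sq * σ2sq * (1 - ρsq))) * Real.exp (-(s₁ ^ 2 / σ1sq) / (1 - ρsq))
      * (σ2sq * (1 - ρsq) / 2 * Real.exp (ρsq * s₁ ^ 2 / (σ1sq * (1 - ρsq))))
      = (4 * s₁ / (σ1sq * σ2sq * (1 - ρsq)) * (σ2sq * (1 - ρsq) / 2))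
        * (Real.exp (-(s₁ ^ 2 / σ1sq) / (1 - ρsq))
            * Real.exp (ρsq * s₁ ^ 2 / (σ1sq * (1 - ρsq)))) by ring]
  rw [← Real.exp_add]
  congr 1
  · field_simp
    ring
  · congr 1
    field_simp
    ring
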